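/- Let G be a finite group such that |ab| ≥ |a|·|b| whenever a and b are commutators of prime power order with coprime orders. Let H be a subgroup of G of prime power order, and let x be a commutator of prime power order with gcd(|x|, |H|) = 1. If x normalizes H, then x centralizes H. -/

import Mathlib

theorem stmt_0 {G : Type*} [Group G] [Finite G]
    (hG : ∀ a b : G, (∃ g h : G, a = g⁻¹ * h⁻¹ * g * h) → (∃ g h : G, b = g⁻¹ * h⁻¹ * g * h) →
      IsPrimePow (orderOf a) → IsPrimePow (orderOf b) →
      Nat.Coprime (orderOf a) (orderOf b) → orderOf (a * b) ≥ orderOf a * orderOf b)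
    (H : Subgroup G) (hH : IsPrimePow (Nat.card H))
    (x : G) (hx : ∃ g h : G, x = g⁻¹ * h⁻¹ * g * h) (hxp : IsPrimePow (orderOf x))
    (hcop : Nat.Coprime (orderOf x) (Nat.card H))
    (hnorm : x ∈ Subgroup.normalizer (H : Set G)) :
    x ∈ Subgroup.centralizer (H : Set G) := by
  rw [Subgroup.mem_centralizer_iff]
  intro h hh
  set c : G := x⁻¹ * h⁻¹ * x * h with hc
  -- c ∈ H
  have hinv : x⁻¹ ∈ Subgroup.normalizer (H : Set G) := inv_mem hnorm
  rw [Subgroup.mem_normalizer_iff] at hinv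
  have hcm : c ∈ H := by
    have h1 : x⁻¹ * h⁻¹ * x ∈ H := by
      have := (hinv h⁻¹).mp (inv_mem hh)
      simpa [mul_assoc] using this
    simpa [hc, mul_assoc] using H.mul_mem h1 hh
  by_cases hc1 : c = 1
  · have hthis : h⁻¹ * x * h = x := by
      have h0 : x * c = x := by rw [hc1, mul_one]
      have h2 : x * (x⁻¹ * h⁻¹ * x * h) = h⁻¹ * x * h := by group
      rw [hc, h2] at h0; exact h0
    have e : h * (h⁻¹ * x * h) = h * x := by rw [hthis]
    simpa [mul_assoc] using e.symm
  · exfalso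
    have hdvd : orderOf c ∣ Nat.card H := H.orderOf_dvd_natCard hcm
    obtain ⟨p, k, hp, hk, hcard⟩ := hH
    have hord : ∃ j ≤ k, orderOf c = p ^ j :=
      (Nat.dvd_prime_pow hp.nat_prime).mp (hcard ▸ hdvd)
    obtain ⟨j, hj, hcj⟩ := hord
    have hone : orderOf c ≠ 1 := by
      simpa [orderOf_eq_one_iff] using hc1
    have hcpp : IsPrimePow (orderOf c) := by
      refine ⟨p, j, hp, ?_, hcj.symm⟩
      rcases Nat.eq_zero_or_pos j with rfl | hjp
      · simp only [pow_zero] at hcj; exact absurd hcj hone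
      · exact hjp
    have hcop' : Nat.Coprime (orderOf x) (orderOf c) :=
      Nat.Coprime.coprime_dvd_right hdvd hcop
    have key := hG x c hx ⟨x, h, rfl⟩ hxp hcpp hcop'
    have hxc : x * c = h⁻¹ * x * h := by rw [hc]; simp [mul_assoc]
    have hsc : SemiconjBy h⁻¹ x (h⁻¹ * x * h) := by
      show h⁻¹ * x = (h⁻¹ * x * h) * h⁻¹
      group
    have hord2 : orderOf (x * c) = orderOf x := by
      rw [hxc, ← hsc.orderOf_eq h⁻¹]
    rw [hord2] at key
    have hx0 : 0 < orderOf x := orderOf_pos x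
    have hc2 : 2 ≤ orderOf c := by
      have := orderOf_pos c
      omega
    have : orderOf x * 2 ≤ orderOf x * orderOf c := Nat.mul_le_mul_left _ hc2
    omega
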